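/- Let q be even and C the [q+1, q−2] Reed-Solomon code with evaluation set PG(1,q). The covering radius of C is 3, and every deep hole u of C has projective syndrome [S(u)] = (0:1:0), the nucleus of the standard conic in PG(2,q). Hence there is exactly one equivalence class of deep holes (u ~ v iff v − a·u ∈ C for some a ≠ 0). -/

import Mathlib

open Finset Polynomial

namespace S12

set_option linter.unusedSectionVars false

set_option linter.unusedSectionVars false

variable {F : Type*} [Field F] [Fintype F] [DecidableEq F]

lemma char_two' (heven : Even (Fintype.card F)) : ringChar F = 2 := by
  haveI : CharP F (ringChar F) := ringChar.charP F
  obtain ⟨n, hp, hcard⟩ := FiniteField.card F (ringChar F)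
  have h2 : 2 ∣ ringChar F := by
    have hd : (2:ℕ) ∣ ringChar F ^ (n:ℕ) := hcard ▸ heven.two_dvd
    exact Nat.Prime.dvd_of_dvd_pow Nat.prime_two hd
  exact ((hp.eq_one_or_self_of_dvd 2 h2).resolve_left (by norm_num)).symm

lemma psum (hq : 4 ≤ Fintype.card F) {k : ℕ} (hk : k ≤ Fintype.card F + 1) :
    ∑ x : F, x ^ k = if k = Fintype.card F - 1 then -1 else 0 := by
  set q := Fintype.card F with hqdef
  rcases lt_trichotomy k (q - 1) with h | h | h
  · rw [if_neg h.ne, FiniteField.sum_pow_lt_card_sub_one F k h]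
  · rw [if_pos h]
    subst h
    have h0 : ∑ x : F, x ^ (q - 1) = ∑ x : F, if x = 0 then 0 else 1 := by
      refine Finset.sum_congr rfl fun x _ => ?_
      by_cases hx : x = 0
      · simp [hx, zero_pow (by omega : q - 1 ≠ 0)]
      · rw [if_neg hx]; exact FiniteField.pow_card_sub_one_eq_one x hx
    rw [h0, Finset.sum_ite, Finset.sum_const, Finset.sum_const, smul_zero, zero_add,
      nsmul_eq_mul, mul_one]
    have : Finset.filter (fun x : F => ¬ x = 0) Finset.univ = Finset.univ.erase 0 := by
      ext x; simp [Finset.mem_erase, and_comm]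
    rw [this, Finset.card_erase_of_mem (Finset.mem_univ 0), Finset.card_univ]
    rw [Nat.cast_sub (by omega), Nat.cast_one, ← hqdef, FiniteField.cast_card_eq_zero,
      zero_sub]
  · rw [if_neg (by omega)]
    have hk' : k = q ∨ k = q + 1 := by omega
    rcases hk' with rfl | rfl
    · have : ∀ x : F, x ^ q = x ^ 1 := fun x => by
        rw [pow_one]; exact FiniteField.pow_card x
      rw [Finset.sum_congr rfl fun x _ => this x]
      exact FiniteField.sum_pow_lt_card_sub_one F 1 (by omega)
    · have : ∀ x : F, x ^ (q + 1) = x ^ 2 := fun x => by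
        rw [pow_succ, FiniteField.pow_card, sq]
      rw [Finset.sum_congr rfl fun x _ => this x]
      exact FiniteField.sum_pow_lt_card_sub_one F 2 (by omega)

lemma sum_eval (hq : 4 ≤ Fintype.card F) (f : Polynomial F)
    (hdeg : f.natDegree ≤ Fintype.card F - 1) {i : ℕ} (hi : i ≤ 2) :
    ∑ t : F, t ^ i * f.eval t = -f.coeff (Fintype.card F - 1 - i) := by
  set q := Fintype.card F with hqdef
  have hev : ∀ t : F, f.eval t = ∑ k ∈ Finset.range q, f.coeff k * t ^ k := fun t =>
    eval_eq_sum_range' (by omega) t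
  calc ∑ t : F, t ^ i * f.eval t
      = ∑ t : F, ∑ k ∈ Finset.range q, f.coeff k * t ^ (i + k) := by
        refine Finset.sum_congr rfl fun t _ => ?_
        rw [hev t, Finset.mul_sum]
        exact Finset.sum_congr rfl fun k _ => by rw [pow_add]; ring
    _ = ∑ k ∈ Finset.range q, f.coeff k * ∑ t : F, t ^ (i + k) := by
        rw [Finset.sum_comm]
        exact Finset.sum_congr rfl fun k _ => (Finset.mul_sum _ _ _).symm
    _ = ∑ k ∈ Finset.range q, f.coeff k * (if i + k = q - 1 then -1 else 0) := by
        refine Finset.sum_congr rfl fun k hk => ?_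
        rw [psum hq (by rw [Finset.mem_range] at hk; omega)]
    _ = -f.coeff (q - 1 - i) := by
        rw [Finset.sum_eq_single (q - 1 - i)]
        · rw [if_pos (by omega), mul_neg_one]
        · intro k _ hne
          rw [if_neg (fun hc => hne (by omega)), mul_zero]
        · intro h
          exact absurd (Finset.mem_range.mpr (by omega)) h

variable {F : Type*} [Field F] [Fintype F] [DecidableEq F]

def Hm (F : Type*) [Field F] : Matrix (Fin 3) (Option F) F :=
  Matrix.of fun i o => o.elim (if (i : ℕ) = 2 then (1 : F) else 0) (fun t => t ^ (i : ℕ))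

def Cs (F : Type*) [Field F] [Fintype F] : Set (Option F → F) :=
  {v | ∃ f : Polynomial F, f.degree < ((Fintype.card F - 2 : ℕ) : ℕ) ∧
      v = fun o => o.elim (f.coeff (Fintype.card F - 3)) (fun t => f.eval t)}

lemma Hm_mulVec (v : Option F → F) (i : Fin 3) :
    (Hm F).mulVec v i
      = (if (i : ℕ) = 2 then 1 else 0) * v none + ∑ t : F, t ^ (i : ℕ) * v (some t) := by
  simp [Hm, Matrix.mulVec, dotProduct, Fintype.sum_option]

lemma memC_iff (hq : 4 ≤ Fintype.card F) (v : Option F → F) :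
    v ∈ Cs F ↔ ∀ i : Fin 3, (Hm F).mulVec v i = 0 := by
  constructor
  · rintro ⟨f, hdeg, rfl⟩ i
    have hc0 : ∀ m : ℕ, Fintype.card F - 2 ≤ m → f.coeff m = 0 := fun m hm =>
      coeff_eq_zero_of_degree_lt (lt_of_lt_of_le hdeg (by exact_mod_cast hm))
    have hnd : f.natDegree ≤ Fintype.card F - 1 := by
      rcases eq_or_ne f 0 with rfl | hf
      · simp
      · have h2 := (natDegree_lt_iff_degree_lt hf).mpr hdeg
        omega
    fin_cases i <;> rw [Hm_mulVec] <;>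
      simp only [Fin.isValue, Option.elim, Fin.val_zero, Fin.val_one, Fin.val_two]
    · rw [sum_eval hq f hnd (by norm_num)]
      rw [hc0 (Fintype.card F - 1 - 0) (by omega)]
      norm_num
    · rw [sum_eval hq f hnd (by norm_num)]
      rw [hc0 (Fintype.card F - 1 - 1) (by omega)]
      norm_num
    · rw [sum_eval hq f hnd (by norm_num)]
      have h3 : Fintype.card F - 1 - 2 = Fintype.card F - 3 := by omega
      rw [h3]
      simp
  · intro h
    set f : Polynomial F := Lagrange.interpolate Finset.univ id (fun t : F => v (some t))
      with hf
    have hev : ∀ t : F, f.eval t = v (some t) := fun t =>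
      Lagrange.eval_interpolate_at_node _ (Set.injOn_id _) (Finset.mem_univ t)
    have hdlt : f.degree < (Fintype.card F : ℕ) := by
      have := Lagrange.degree_interpolate_lt (fun t : F => v (some t)) (Set.injOn_id _)
        (s := Finset.univ)
      rwa [Finset.card_univ] at this
    have hnd : f.natDegree ≤ Fintype.card F - 1 := by
      rcases eq_or_ne f 0 with h0 | hf0
      · rw [h0]; simp
      · have h2 := (natDegree_lt_iff_degree_lt hf0).mpr hdlt
        omega
    have e0 := h 0; have e1 := h 1; have e2 := h 2
    rw [Hm_mulVec] at e0 e1 e2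
    simp only [Fin.isValue, Fin.val_zero, Fin.val_one, Fin.val_two] at e0 e1 e2
    rw [show ∑ t : F, t ^ (0:ℕ) * v (some t) = ∑ t : F, t ^ (0:ℕ) * f.eval t from
      Finset.sum_congr rfl fun t _ => by rw [hev], sum_eval hq f hnd (by norm_num)] at e0
    rw [show ∑ t : F, t ^ (1:ℕ) * v (some t) = ∑ t : F, t ^ (1:ℕ) * f.eval t from
      Finset.sum_congr rfl fun t _ => by rw [hev], sum_eval hq f hnd (by norm_num)] at e1
    rw [show ∑ t : F, t ^ (2:ℕ) * v (some t) = ∑ t : F, t ^ (2:ℕ) * f.eval t from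
      Finset.sum_congr rfl fun t _ => by rw [hev], sum_eval hq f hnd (by norm_num)] at e2
    norm_num at e0 e1 e2
    -- e0 : f.coeff (q-1-0) = 0, e1 : f.coeff (q-1-1) = 0, e2 : v none = f.coeff (q-1-2)
    refine ⟨f, ?_, ?_⟩
    · rw [degree_lt_iff_coeff_zero]
      intro m hm
      rcases lt_or_ge m (Fintype.card F) with hmq | hmq
      · have : m = Fintype.card F - 2 ∨ m = Fintype.card F - 1 := by omega
        rcases this with rfl | rfl
        · rw [show Fintype.card F - 2 = Fintype.card F - 1 - 1 from by omega]
          exact e1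
        · exact e0
      · exact coeff_eq_zero_of_degree_lt (lt_of_lt_of_le hdlt (by exact_mod_cast hmq))
    · funext o
      cases o with
      | none =>
        simp only [Option.elim]
        rw [show Fintype.card F - 3 = Fintype.card F - 1 - 2 from by omega]
        linear_combination e2
      | some t => simp [hev]

lemma sum_single_pt (φ : F → F) (a α : F) :
    ∑ t : F, φ t * (if t = a then α else 0) = φ a * α := by
  rw [Finset.sum_eq_single a]
  · rw [if_pos rfl]
  · intro b _ hb; rw [if_neg hb, mul_zero]
  · intro h; exact absurd (Finset.mem_univ a) h

lemma sum_two_pt (φ : F → F) {a b : F} (hab : a ≠ b) (α β : F) :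
    ∑ t : F, φ t * (if t = a then α else if t = b then β else 0) = φ a * α + φ b * β := by
  rw [← Finset.sum_subset (Finset.subset_univ ({a, b} : Finset F))]
  · rw [Finset.sum_pair hab, if_pos rfl, if_neg (Ne.symm hab), if_pos rfl]
  · intro x _ hx
    simp only [Finset.mem_insert, Finset.mem_singleton, not_or] at hx
    rw [if_neg hx.1, if_neg hx.2, mul_zero]

lemma dist_sub_le (u e : Option F → F) (s : Finset (Option F))
    (h : ∀ o, e o ≠ 0 → o ∈ s) : hammingDist u (u - e) ≤ s.card := by
  refine Finset.card_le_card fun o ho => ?_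
  rw [Finset.mem_filter] at ho
  refine h o fun h0 => ho.2 ?_
  simp [h0]

lemma no_small [CharP F 2] (e : Option F → F) (a : F) (ha : a ≠ 0)
    (h0 : (Hm F).mulVec e 0 = 0) (h1 : (Hm F).mulVec e 1 = a)
    (h2 : (Hm F).mulVec e 2 = 0)
    (hw : #{o : Option F | e o ≠ 0} ≤ 2) : False := by
  rw [Hm_mulVec] at h0 h1 h2
  norm_num at h0 h1 h2
  set g : F → F := fun t => e (some t) with hg
  set T : Finset F := {t : F | g t ≠ 0} with hT
  have hTsum : ∀ φ : F → F, ∑ t : F, φ t * g t = ∑ t ∈ T, φ t * g t := by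
    intro φ
    refine (Finset.sum_subset (Finset.subset_univ T) fun x _ hx => ?_).symm
    have : g x = 0 := by
      by_contra hgx
      exact hx (by simpa [hT] using hgx)
    rw [this, mul_zero]
  have himg : T.image some ⊆ Finset.filter (fun o : Option F => e o ≠ 0) Finset.univ := by
    intro o ho
    rw [Finset.mem_image] at ho
    obtain ⟨t, ht, rfl⟩ := ho
    simp only [hT, Finset.mem_filter] at ht
    simpa using ht.2
  have hTcard : T.card ≤ 2 := by
    calc T.card = (T.image some).card := (Finset.card_image_of_injective T (Option.some_injective F)).symm
    _ ≤ _ := Finset.card_le_card himg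
    _ ≤ 2 := hw
  -- reduce the three syndrome identities to sums over T
  have s0 : ∑ t ∈ T, g t = 0 := by
    rw [← h0]
    have := (hTsum fun _ => 1)
    simpa using this.symm
  have s1 : ∑ t ∈ T, t * g t = a := by
    rw [← h1]
    exact (hTsum id).symm
  have s2 : e none + ∑ t ∈ T, t ^ 2 * g t = 0 := by
    rw [← h2, hTsum fun t => t ^ 2]
  -- case analysis on T.card
  interval_cases hc : T.card
  · rw [Finset.card_eq_zero] at hc
    rw [hc, Finset.sum_empty] at s1
    exact ha s1.symm
  · rw [Finset.card_eq_one] at hc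
    obtain ⟨x, hc⟩ := hc
    rw [hc, Finset.sum_singleton] at s0
    have hmem : x ∈ T := by rw [hc]; exact Finset.mem_singleton_self x
    rw [hT, Finset.mem_filter] at hmem
    exact hmem.2 s0
  · rw [Finset.card_eq_two] at hc
    obtain ⟨x, y, hxy, hc⟩ := hc
    -- none is not in the support: otherwise weight ≥ 3
    have hnone : e none = 0 := by
      by_contra hne
      have hsubW : insert none (T.image some) ⊆
          Finset.filter (fun o : Option F => e o ≠ 0) Finset.univ := by
        intro o ho
        rcases Finset.mem_insert.mp ho with rfl | ho
        · simp only [Finset.mem_filter]; exact ⟨Finset.mem_univ _, hne⟩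
        · exact himg ho
      have : 3 ≤ #(Finset.filter (fun o : Option F => e o ≠ 0) Finset.univ) := by
        have hcard : (insert none (T.image some)).card = 3 := by
          rw [Finset.card_insert_of_notMem (by simp), Finset.card_image_of_injective T
            (Option.some_injective F), hc, Finset.card_pair hxy]
        rw [← hcard]
        exact Finset.card_le_card hsubW
      omega
    rw [hc, Finset.sum_pair hxy] at s0 s1 s2
    rw [hnone, zero_add] at s2
    have h2w : (2 : F) = 0 := by
      have := CharP.cast_eq_zero F 2
      exact_mod_cast this
    have hgy : g y = g x := by
      have h := eq_neg_of_add_eq_zero_right s0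
      rw [h]
      linear_combination (-(g x)) * h2w
    rw [hgy] at s1 s2
    have e2 : g x * (x + y) ^ 2 = 0 := by
      linear_combination s2 + x * y * g x * h2w
    have : a ^ 2 = 0 := by
      calc a ^ 2 = g x * (g x * (x + y) ^ 2) := by linear_combination (x * g x + y * g x + a) * s1.symm
      _ = 0 := by rw [e2, mul_zero]
    exact ha (pow_eq_zero_iff (n := 2) (by norm_num) |>.mp this)

lemma two_eq_zero' [CharP F 2] : (2 : F) = 0 := by
  exact_mod_cast CharP.cast_eq_zero F 2

/-- key contradiction tool: if some `e` has the same syndrome as `u` and support of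
size ≤ 2, then `u` is not a deep hole. -/
lemma key_tool (hq : 4 ≤ Fintype.card F) (u : Option F → F)
    (hdeep : ∀ c ∈ Cs F, 3 ≤ hammingDist u c) (e : Option F → F)
    (he : ∀ i, (Hm F).mulVec e i = (Hm F).mulVec u i)
    (s : Finset (Option F)) (hs : ∀ o, e o ≠ 0 → o ∈ s) (hcard : s.card ≤ 2) : False := by
  have hc : u - e ∈ Cs F := (memC_iff hq _).mpr fun i => by
    rw [Matrix.mulVec_sub]
    simp [he i]
  have h3 := hdeep _ hc
  have hle := dist_sub_le u e s hs
  omega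

lemma key1 {x y : F} (hx : x ≠ 0) (hy : y ≠ 0) : y / x * (x ^ 2 / y) = x := by
  field_simp

lemma key2 {x y : F} (hx : x ≠ 0) (hy : y ≠ 0) : (y / x) ^ 2 * (x ^ 2 / y) = y := by
  field_simp

lemma deep_syndrome [CharP F 2] (hq : 4 ≤ Fintype.card F) (u : Option F → F)
    (hdeep : ∀ c ∈ Cs F, 3 ≤ hammingDist u c) :
    (Hm F).mulVec u 0 = 0 ∧ (Hm F).mulVec u 2 = 0 ∧ (Hm F).mulVec u 1 ≠ 0 := by
  set a0 := (Hm F).mulVec u 0 with ha0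
  set a1 := (Hm F).mulVec u 1 with ha1
  set a2 := (Hm F).mulVec u 2 with ha2
  have h2w : (2 : F) = 0 := two_eq_zero'
  have h0 : a0 = 0 := by
    by_contra h0ne
    set t0 : F := a1 / a0 with ht0
    refine key_tool hq u hdeep
      (fun o => o.elim (a2 + a0 * t0 ^ 2) (fun t => if t = t0 then a0 else 0)) ?_
      {some t0, none} ?_ ?_
    · intro i
      fin_cases i <;> rw [Hm_mulVec] <;>
        simp only [Option.elim, Fin.isValue, Fin.val_zero, Fin.val_one, Fin.val_two] <;>
        rw [sum_single_pt]
      · show _ = a0; norm_num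
      · show _ = a1; rw [pow_one, ht0]; norm_num; exact div_mul_cancel₀ a1 h0ne
      · show _ = a2; simp only [if_true, one_mul]; linear_combination a0 * t0 ^ 2 * h2w
    · intro o ho
      match o with
      | none => simp
      | some t =>
        simp only [Option.elim] at ho
        have : t = t0 := by by_contra hne; rw [if_neg hne] at ho; exact ho rfl
        simp [this]
    · exact (Finset.card_insert_le _ _).trans (by simp)
  have h1 : a1 ≠ 0 := by
    intro h1e
    refine key_tool hq u hdeep (fun o => o.elim a2 (fun _ => 0)) ?_ {none} ?_ ?_
    · intro i
      fin_cases i <;> rw [Hm_mulVec] <;>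
        simp only [Option.elim, Fin.isValue, Fin.val_zero, Fin.val_one, Fin.val_two]
      · show _ = a0; rw [h0]; simp
      · show _ = a1; rw [h1e]; simp
      · show _ = a2; simp
    · intro o ho
      match o with
      | none => simp
      | some t => simp only [Option.elim] at ho; exact absurd rfl ho
    · simp
  have h2 : a2 = 0 := by
    by_contra h2ne
    set b : F := a2 / a1 with hb
    have hbne : (0 : F) ≠ b := by
      intro hb0
      refine h2ne ?_
      have h' := hb0.symm
      rw [hb, _root_.div_eq_zero_iff] at h'
      exact h'.resolve_right h1
    set α : F := a1 ^ 2 / a2 with hα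
    refine key_tool hq u hdeep
      (fun o => o.elim 0 (fun t => if t = 0 then α else if t = b then α else 0)) ?_
      {some 0, some b} ?_ ?_
    · intro i
      fin_cases i <;> rw [Hm_mulVec] <;>
        simp only [Option.elim, Fin.isValue, Fin.val_zero, Fin.val_one, Fin.val_two] <;>
        rw [sum_two_pt _ hbne]
      · show _ = a0; rw [h0]; norm_num; linear_combination α * h2w
      · show _ = a1
        rw [hb, hα]
        norm_num
        exact key1 h1 h2ne
      · show _ = a2
        rw [hb, hα]
        norm_num
        exact key2 h1 h2ne
    · intro o ho
      match o with
      | none => simp only [Option.elim] at ho; exact absurd rfl ho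
      | some t =>
        simp only [Option.elim] at ho
        rcases eq_or_ne t 0 with rfl | ht0
        · simp
        · rw [if_neg ht0] at ho
          have : t = b := by by_contra hne; rw [if_neg hne] at ho; exact ho rfl
          simp [this]
    · exact (Finset.card_insert_le _ _).trans (by simp)
  exact ⟨h0, h2, h1⟩

lemma covering [CharP F 2] (hq : 4 ≤ Fintype.card F) (u : Option F → F) :
    ∃ c ∈ Cs F, hammingDist u c ≤ 3 := by
  set a0 := (Hm F).mulVec u 0 with ha0
  set a1 := (Hm F).mulVec u 1 with ha1
  set a2 := (Hm F).mulVec u 2 with ha2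
  have h2w : (2 : F) = 0 := two_eq_zero'
  set e : Option F → F :=
    fun o => o.elim (a2 + a1) (fun t => if t = 0 then a0 + a1 else if t = 1 then a1 else 0)
    with he
  have hsyn : ∀ i, (Hm F).mulVec e i = (Hm F).mulVec u i := by
    intro i
    fin_cases i <;> rw [Hm_mulVec] <;>
      simp only [he, Option.elim, Fin.isValue, Fin.val_zero, Fin.val_one, Fin.val_two] <;>
      rw [sum_two_pt _ (zero_ne_one' F)]
    · show _ = a0; norm_num; linear_combination a1 * h2w
    · show _ = a1; norm_num
    · show _ = a2; norm_num; linear_combination a1 * h2w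
  refine ⟨u - e, (memC_iff hq _).mpr fun i => by rw [Matrix.mulVec_sub]; simp [hsyn i], ?_⟩
  refine (dist_sub_le u e {some 0, some 1, none} ?_).trans ?_
  · intro o ho
    match o with
    | none => simp
    | some t =>
      simp only [he, Option.elim] at ho
      rcases eq_or_ne t 0 with rfl | ht0
      · simp
      · rw [if_neg ht0] at ho
        have : t = 1 := by by_contra hne; rw [if_neg hne] at ho; exact ho rfl
        simp [this]
  · exact (Finset.card_insert_le _ _).trans
      (Nat.succ_le_succ ((Finset.card_insert_le _ _).trans (by simp)))

lemma exists_deep [CharP F 2] (hq : 4 ≤ Fintype.card F) :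
    ∃ u : Option F → F, ∀ c ∈ Cs F, 3 ≤ hammingDist u c := by
  have h2w : (2 : F) = 0 := two_eq_zero'
  set u : Option F → F :=
    fun o => o.elim 1 (fun t => if t = 0 then 1 else if t = 1 then 1 else 0) with hu
  have hsyn0 : (Hm F).mulVec u 0 = 0 := by
    rw [Hm_mulVec]
    simp only [hu, Option.elim, Fin.isValue, Fin.val_zero]
    rw [sum_two_pt _ (zero_ne_one' F)]
    norm_num
    linear_combination h2w
  have hsyn1 : (Hm F).mulVec u 1 = 1 := by
    rw [Hm_mulVec]
    simp only [hu, Option.elim, Fin.isValue, Fin.val_one]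
    rw [sum_two_pt _ (zero_ne_one' F)]
    norm_num
  have hsyn2 : (Hm F).mulVec u 2 = 0 := by
    rw [Hm_mulVec]
    simp only [hu, Option.elim, Fin.isValue, Fin.val_two]
    rw [sum_two_pt _ (zero_ne_one' F)]
    norm_num
    linear_combination h2w
  refine ⟨u, fun c hc => ?_⟩
  by_contra hlt
  push_neg at hlt
  set e : Option F → F := u - c with he
  have hce : ∀ i, (Hm F).mulVec e i = (Hm F).mulVec u i := fun i => by
    rw [he, Matrix.mulVec_sub]
    simp [(memC_iff hq c).mp hc i]
  have hw : #{o : Option F | e o ≠ 0} ≤ 2 := by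
    have heq : (Finset.filter (fun o : Option F => e o ≠ 0) Finset.univ)
        = Finset.filter (fun o : Option F => u o ≠ c o) Finset.univ := by
      apply Finset.filter_congr
      intro o _
      simp [he, sub_ne_zero]
    have : hammingDist u c = #{o : Option F | e o ≠ 0} := by
      rw [hammingDist]
      rw [heq]
    omega
  exact no_small e 1 one_ne_zero (by rw [hce 0, hsyn0]) (by rw [hce 1, hsyn1])
    (by rw [hce 2, hsyn2]) hw

lemma master (heven : Even (Fintype.card F)) (hq : 4 ≤ Fintype.card F) :
    ((∀ u : Option F → F, ∃ c ∈ Cs F, hammingDist u c ≤ 3) ∧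
     (∃ u : Option F → F, ∀ c ∈ Cs F, 3 ≤ hammingDist u c)) ∧
    (∀ u : Option F → F, (∀ c ∈ Cs F, 3 ≤ hammingDist u c) →
      ∃ a : F, a ≠ 0 ∧ (Hm F).mulVec u = fun i : Fin 3 => if (i : ℕ) = 1 then a else 0) ∧
    (∀ u v : Option F → F, (∀ c ∈ Cs F, 3 ≤ hammingDist u c) →
      (∀ c ∈ Cs F, 3 ≤ hammingDist v c) → ∃ a : F, a ≠ 0 ∧ v - a • u ∈ Cs F) := by
  haveI : CharP F 2 := ringChar.of_eq (char_two' heven)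
  refine ⟨⟨fun u => covering hq u, exists_deep hq⟩, fun u hu => ?_, fun u v hu hv => ?_⟩
  · obtain ⟨h0, h2, h1⟩ := deep_syndrome hq u hu
    refine ⟨(Hm F).mulVec u 1, h1, ?_⟩
    funext i
    fin_cases i
    · simpa using h0
    · simp
    · simpa using h2
  · obtain ⟨hu0, hu2, hu1⟩ := deep_syndrome hq u hu
    obtain ⟨hv0, hv2, hv1⟩ := deep_syndrome hq v hv
    set a : F := (Hm F).mulVec v 1 / (Hm F).mulVec u 1 with ha
    refine ⟨a, by
      rw [ha]
      exact div_ne_zero hv1 hu1, ?_⟩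
    rw [memC_iff hq]
    intro i
    rw [Matrix.mulVec_sub, Matrix.mulVec_smul]
    fin_cases i
    · show (Hm F).mulVec v 0 - a * (Hm F).mulVec u 0 = 0
      rw [hv0, hu0, mul_zero, sub_zero]
    · show (Hm F).mulVec v 1 - a * (Hm F).mulVec u 1 = 0
      rw [ha, div_mul_cancel₀ _ hu1, sub_self]
    · show (Hm F).mulVec v 2 - a * (Hm F).mulVec u 2 = 0
      rw [hv2, hu2, mul_zero, sub_zero]

end S12

/-- Let q be even and C the [q+1, q−2] Reed–Solomon code with
evaluation set PG(1,q) (coordinates indexed by `Option F`, `none` = ∞).  The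
covering radius of C is 3, every deep hole u of C (word at distance 3 from C) has
projective syndrome (0:1:0) — the nucleus of the standard conic — and hence there
is exactly one equivalence class of deep holes (u ~ v iff v − a·u ∈ C, a ≠ 0). -/
theorem stmt_12 {F : Type*} [Field F] [Fintype F] [DecidableEq F]
    (heven : Even (Fintype.card F)) (hq : 4 ≤ Fintype.card F) :
    let q := Fintype.card F
    let C : Set (Option F → F) := {v | ∃ f : Polynomial F, f.degree < ((q - 2 : ℕ) : ℕ) ∧
      v = fun o => o.elim (f.coeff (q - 3)) (fun t => f.eval t)}
    let H : Matrix (Fin 3) (Option F) F :=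
      Matrix.of fun i o => o.elim (if (i : ℕ) = 2 then (1 : F) else 0) (fun t => t ^ (i : ℕ))
    -- the covering radius of C equals 3
    ((∀ u : Option F → F, ∃ c ∈ C, hammingDist u c ≤ 3) ∧
     (∃ u : Option F → F, ∀ c ∈ C, 3 ≤ hammingDist u c)) ∧
    -- every deep hole has projective syndrome (0:1:0)
    (∀ u : Option F → F, (∀ c ∈ C, 3 ≤ hammingDist u c) →
      ∃ a : F, a ≠ 0 ∧ H.mulVec u = fun (i : Fin 3) => if (i : ℕ) = 1 then a else 0) ∧
    -- exactly one equivalence class of deep holes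
    (∀ u v : Option F → F, (∀ c ∈ C, 3 ≤ hammingDist u c) →
      (∀ c ∈ C, 3 ≤ hammingDist v c) → ∃ a : F, a ≠ 0 ∧ v - a • u ∈ C) := by
  intro q C H
  exact S12.master heven hq
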